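/- arXiv:1412.8365 — 2 statements merged into one kernel-verified Lean document; each statement's English description precedes it below -/
import Mathlib

section
/- Suppose S ∈ ℝ^{n×n} is symmetric positive definite and satisfies the algebraic Riccati equation S A₀ + A₀ᵀ S + F_m + Q − S B R⁻¹ Bᵀ S = 0 with Q > 0, R > 0 symmetric, and F_m ⪰ φᵀ R φ for a fixed matrix φ ∈ ℝ^{m×n}. Let K₁ := −R⁻¹BᵀS and V(x) := xᵀSx. Then along trajectories of ẋ = (A₀ + B K₁ + B φ)x one has V̇(x) = −xᵀ[(F_m − φᵀRφ) + Q + (K₁+φ)ᵀR(K₁+φ)]x, and hence V̇(x) ≤ −xᵀQx < 0 for all x ≠ 0. -/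
open Matrix

/-- If `S ≻ 0` solves the Riccati equation `S A₀ + A₀ᵀ S + Fₘ + Q − S B R⁻¹ Bᵀ S = 0`
with `Q ≻ 0`, `R ≻ 0` and `Fₘ ⪰ φᵀ R φ`, and `K₁ = −R⁻¹BᵀS`, `V(x) = xᵀSx`, then along
`ẋ = (A₀ + BK₁ + Bφ)x` we have
`V̇(x) = −xᵀ[(Fₘ − φᵀRφ) + Q + (K₁+φ)ᵀR(K₁+φ)]x ≤ −xᵀQx < 0` for `x ≠ 0`. -/
theorem riccati_robust_stability {n m : ℕ}
    (A0 : Matrix (Fin n) (Fin n) ℝ) (B : Matrix (Fin n) (Fin m) ℝ)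
    (S Q Fm : Matrix (Fin n) (Fin n) ℝ) (R : Matrix (Fin m) (Fin m) ℝ)
    (φ : Matrix (Fin m) (Fin n) ℝ)
    (hS : S.PosDef) (hQ : Q.PosDef) (hR : R.PosDef)
    (hFm : Fm.IsHermitian) (hFmφ : (Fm - φᵀ * R * φ).PosSemidef)
    (hric : S * A0 + A0ᵀ * S + Fm + Q - S * B * R⁻¹ * Bᵀ * S = 0) :
    letI K₁ : Matrix (Fin m) (Fin n) ℝ := -(R⁻¹ * Bᵀ * S)
    ∀ x : Fin n → ℝ,
      -- `V̇(x) = 2 xᵀ S ẋ` along `ẋ = (A₀ + BK₁ + Bφ)x`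
      (2 * (x ⬝ᵥ S.mulVec ((A0 + B * K₁ + B * φ).mulVec x))
        = -(x ⬝ᵥ ((Fm - φᵀ * R * φ) + Q + (K₁ + φ)ᵀ * R * (K₁ + φ)).mulVec x)) ∧
      2 * (x ⬝ᵥ S.mulVec ((A0 + B * K₁ + B * φ).mulVec x)) ≤ -(x ⬝ᵥ Q.mulVec x) ∧
      (x ≠ 0 → 2 * (x ⬝ᵥ S.mulVec ((A0 + B * K₁ + B * φ).mulVec x)) < 0) := by
  intro x
  set K₁ : Matrix (Fin m) (Fin n) ℝ := -(R⁻¹ * Bᵀ * S) with hK₁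
  set M : Matrix (Fin n) (Fin n) ℝ := A0 + B * K₁ + B * φ with hM
  -- basic facts
  have hRdet : IsUnit R.det := isUnit_iff_ne_zero.mpr (ne_of_gt hR.det_pos)
  have hRinv : R⁻¹ * R = 1 := nonsing_inv_mul R hRdet
  have hRinv' : R * R⁻¹ = 1 := mul_nonsing_inv R hRdet
  have hcan1 : ∀ X : Matrix (Fin m) (Fin n) ℝ, R⁻¹ * (R * X) = X := fun X => by
    rw [← Matrix.mul_assoc, hRinv, Matrix.one_mul]
  have hcan2 : ∀ X : Matrix (Fin m) (Fin n) ℝ, R * (R⁻¹ * X) = X := fun X => by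
    rw [← Matrix.mul_assoc, hRinv', Matrix.one_mul]
  have hSt : Sᵀ = S := by
    have := hS.isHermitian; simpa using this.eq
  have hRt : Rᵀ = R := by
    have := hR.isHermitian; simpa using this.eq
  have hRit : R⁻¹ᵀ = R⁻¹ := by rw [transpose_nonsing_inv, hRt]
  -- the key matrix identity
  have hG : S * (B * (R⁻¹ * (Bᵀ * S))) = S * A0 + A0ᵀ * S + Fm + Q := by
    have h := (sub_eq_zero.mp hric).symm
    simpa [Matrix.mul_assoc] using h
  have key : S * M + Mᵀ * S
      = -((Fm - φᵀ * R * φ) + Q + (K₁ + φ)ᵀ * R * (K₁ + φ)) := by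
    rw [hM]
    simp only [hK₁, transpose_add, transpose_mul, transpose_neg, hSt, hRt, hRit,
      Matrix.mul_add, Matrix.add_mul, Matrix.mul_neg, Matrix.neg_mul, neg_neg,
      transpose_transpose, Matrix.mul_assoc, hcan1, hcan2]
    rw [hG]
    abel
  -- scalar consequences
  have hsymdot : ∀ A : Matrix (Fin n) (Fin n) ℝ, x ⬝ᵥ Aᵀ.mulVec x = x ⬝ᵥ A.mulVec x := by
    intro A
    rw [dotProduct_mulVec, vecMul_transpose, dotProduct_comm]
  have h2 : 2 * (x ⬝ᵥ S.mulVec (M.mulVec x)) = x ⬝ᵥ (S * M + Mᵀ * S).mulVec x := by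
    have h1 : x ⬝ᵥ (Mᵀ * S).mulVec x = x ⬝ᵥ (S * M).mulVec x := by
      have : (S * M)ᵀ = Mᵀ * S := by rw [transpose_mul, hSt]
      rw [← this, hsymdot]
    rw [mulVec_mulVec, add_mulVec, dotProduct_add, h1]
    ring
  have heq : 2 * (x ⬝ᵥ S.mulVec (M.mulVec x))
      = -(x ⬝ᵥ ((Fm - φᵀ * R * φ) + Q + (K₁ + φ)ᵀ * R * (K₁ + φ)).mulVec x) := by
    rw [h2, key, neg_mulVec, dotProduct_neg]
  -- positive semidefiniteness of the conjugated term
  have hT : 0 ≤ x ⬝ᵥ ((K₁ + φ)ᵀ * R * (K₁ + φ)).mulVec x := by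
    set y := (K₁ + φ).mulVec x with hy
    have : x ⬝ᵥ ((K₁ + φ)ᵀ * R * (K₁ + φ)).mulVec x = y ⬝ᵥ R.mulVec y := by
      rw [Matrix.mul_assoc, ← mulVec_mulVec, dotProduct_mulVec, vecMul_transpose,
        ← mulVec_mulVec]
    rw [this]
    simpa using hR.posSemidef.dotProduct_mulVec_nonneg y
  have hP : 0 ≤ x ⬝ᵥ (Fm - φᵀ * R * φ).mulVec x := by simpa using hFmφ.dotProduct_mulVec_nonneg x
  have hQx : ∀ z : Fin n → ℝ, z ≠ 0 → 0 < z ⬝ᵥ Q.mulVec z := by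
    intro z hz; simpa using hQ.dotProduct_mulVec_pos hz
  have hQx0 : 0 ≤ x ⬝ᵥ Q.mulVec x := by simpa using hQ.posSemidef.dotProduct_mulVec_nonneg x
  have hexp : x ⬝ᵥ ((Fm - φᵀ * R * φ) + Q + (K₁ + φ)ᵀ * R * (K₁ + φ)).mulVec x
      = x ⬝ᵥ (Fm - φᵀ * R * φ).mulVec x + x ⬝ᵥ Q.mulVec x
        + x ⬝ᵥ ((K₁ + φ)ᵀ * R * (K₁ + φ)).mulVec x := by
    simp [add_mulVec, dotProduct_add]
  refine ⟨heq, ?_, ?_⟩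
  · rw [heq, hexp]; linarith
  · intro hx
    rw [heq, hexp]
    have := hQx x hx
    linarith
end

section
/- Suppose V : ℝⁿ → ℝ is continuous with α₁(‖x‖) ≤ V(x) ≤ α₂(‖x‖) for class-K∞ functions α₁, α₂, and along trajectories V̇ ≤ −c₁‖x‖² + c₂‖e‖² for constants c₁, c₂ > 0. If the triggering rule enforces ‖e(t)‖² ≤ (σc₁/c₂)‖x(t)‖² for σ ∈ (0,1) at all times, then V̇ ≤ −(1−σ)c₁‖x(t)‖² for all t, and hence x(t) → 0 as t → ∞ along any bounded trajectory. -/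
open Filter Topology

/-- Abstract ISS-based event-triggering argument: `V` is an ISS Lyapunov function
with class-`K∞` bounds `α₁(‖x‖) ≤ V(x) ≤ α₂(‖x‖)` and
`V̇ ≤ −c₁‖x‖² + c₂‖e‖²`; if the triggering rule enforces
`‖e(t)‖² ≤ (σc₁/c₂)‖x(t)‖²` with `σ ∈ (0,1)`, then
`V̇ ≤ −(1−σ)c₁‖x(t)‖²` for all `t`, and `x(t) → 0` along any bounded trajectory. -/
theorem iss_event_trigger_abstract {n : ℕ}
    (V : EuclideanSpace ℝ (Fin n) → ℝ) (hVcont : Continuous V)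
    (α₁ α₂ : ℝ → ℝ)
    (hα₁ : StrictMono α₁ ∧ Continuous α₁ ∧ α₁ 0 = 0 ∧ Tendsto α₁ atTop atTop)
    (hα₂ : StrictMono α₂ ∧ Continuous α₂ ∧ α₂ 0 = 0 ∧ Tendsto α₂ atTop atTop)
    (hsandwich : ∀ z, α₁ ‖z‖ ≤ V z ∧ V z ≤ α₂ ‖z‖)
    (c₁ c₂ σ : ℝ) (hc₁ : 0 < c₁) (hc₂ : 0 < c₂) (hσ : σ ∈ Set.Ioo (0 : ℝ) 1)
    (x e : ℝ → EuclideanSpace ℝ (Fin n)) (Vd : ℝ → ℝ)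
    (hV : ∀ t, HasDerivAt (fun s => V (x s)) (Vd t) t)
    (hVd : ∀ t, Vd t ≤ -c₁ * ‖x t‖ ^ 2 + c₂ * ‖e t‖ ^ 2)
    (htrig : ∀ t, ‖e t‖ ^ 2 ≤ (σ * c₁ / c₂) * ‖x t‖ ^ 2) :
    (∀ t, Vd t ≤ -(1 - σ) * c₁ * ‖x t‖ ^ 2) ∧
    (Bornology.IsBounded (Set.range x) → Tendsto x atTop (𝓝 0)) := by
  obtain ⟨hσ0, hσ1⟩ := hσ
  obtain ⟨hα₁mono, hα₁cont, hα₁0, -⟩ := hα₁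
  obtain ⟨hα₂mono, hα₂cont, hα₂0, -⟩ := hα₂
  have hmain : ∀ t, Vd t ≤ -(1 - σ) * c₁ * ‖x t‖ ^ 2 := by
    intro t
    have h1 := hVd t
    have h2 : c₂ * ‖e t‖ ^ 2 ≤ σ * c₁ * ‖x t‖ ^ 2 := by
      have h := htrig t
      have := mul_le_mul_of_nonneg_left h hc₂.le
      calc c₂ * ‖e t‖ ^ 2 ≤ c₂ * ((σ * c₁ / c₂) * ‖x t‖ ^ 2) := this
        _ = σ * c₁ * ‖x t‖ ^ 2 := by field_simp
    nlinarith
  refine ⟨hmain, fun _ => ?_⟩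
  set W : ℝ → ℝ := fun s => V (x s) with hWdef
  have hW0 : ∀ t, 0 ≤ W t := by
    intro t
    have h := (hsandwich (x t)).1
    have : α₁ 0 ≤ α₁ ‖x t‖ := hα₁mono.monotone (norm_nonneg _)
    simpa [hα₁0] using this.trans h
  have hVdnonpos : ∀ t, Vd t ≤ 0 := by
    intro t
    have := hmain t
    nlinarith [sq_nonneg ‖x t‖, mul_nonneg (mul_nonneg (by linarith : (0:ℝ) ≤ 1 - σ) hc₁.le) (sq_nonneg ‖x t‖)]
  have hWanti : Antitone W := by
    apply antitone_of_deriv_nonpos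
    · exact fun t => (hV t).differentiableAt
    · intro t; rw [(hV t).deriv]; exact hVdnonpos t
  rw [NormedAddCommGroup.tendsto_nhds_zero]
  intro ε hε
  have hex : ∃ T, W T < α₁ ε := by
    by_contra hcon
    push_neg at hcon
    have hL : 0 < α₁ ε := by
      have := hα₁mono hε
      simpa [hα₁0] using this
    have hnhds : ∀ᶠ s in 𝓝 (0 : ℝ), α₂ s < α₁ ε := by
      have h : Tendsto α₂ (𝓝 0) (𝓝 (α₂ 0)) := hα₂cont.continuousAt
      rw [hα₂0] at h
      exact h.eventually (eventually_lt_nhds hL)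
    obtain ⟨δ, hδpos, hδ⟩ := Metric.eventually_nhds_iff.mp hnhds
    have hxlb : ∀ t, δ / 2 ≤ ‖x t‖ := by
      intro t
      by_contra hlt
      push_neg at hlt
      have hd : dist ‖x t‖ 0 < δ := by
        rw [Real.dist_eq, sub_zero, abs_of_nonneg (norm_nonneg _)]
        linarith
      have := hδ hd
      have h1 := (hsandwich (x t)).2
      have h2 := hcon t
      simp only [hWdef] at h2
      linarith
    set κ : ℝ := (1 - σ) * c₁ * (δ / 2) ^ 2 with hκdef
    have hκpos : 0 < κ := by rw [hκdef]; exact mul_pos (mul_pos (by linarith) hc₁) (by positivity)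
    have hg : ∀ t, HasDerivAt (fun s => W s + κ * s) (Vd t + κ) t := by
      intro t
      exact ((hV t).add ((hasDerivAt_id t).const_mul κ)).congr_deriv (by ring)
    have hganti : Antitone (fun s => W s + κ * s) := by
      apply antitone_of_deriv_nonpos
      · exact fun t => (hg t).differentiableAt
      · intro t
        rw [(hg t).deriv]
        have h1 := hmain t
        have h2 := hxlb t
        have h3 : (δ / 2) ^ 2 ≤ ‖x t‖ ^ 2 :=
          pow_le_pow_left₀ (by linarith) h2 2
        have h4 : (1 - σ) * c₁ * (δ / 2) ^ 2 ≤ (1 - σ) * c₁ * ‖x t‖ ^ 2 :=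
          mul_le_mul_of_nonneg_left h3 (by nlinarith)
        rw [hκdef]
        linarith
    have hT : (0 : ℝ) ≤ (W 0 + 1) / κ := div_nonneg (by linarith [hW0 0]) hκpos.le
    have := hganti hT
    simp only at this
    have hW' := hW0 ((W 0 + 1) / κ)
    have hfield : κ * ((W 0 + 1) / κ) = W 0 + 1 := by field_simp
    nlinarith
  obtain ⟨T, hT⟩ := hex
  filter_upwards [eventually_ge_atTop T] with t ht
  have h1 : W t ≤ W T := hWanti ht
  have h2 : α₁ ‖x t‖ < α₁ ε := by
    have := (hsandwich (x t)).1
    simp only [hWdef] at h1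
    linarith
  by_contra hge
  push_neg at hge
  exact absurd h2 (not_lt.mpr (hα₁mono.monotone hge))
end
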